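/- For all n ≥ 1 and i, j ≥ 0, the coefficients b_{n,i,j} satisfy b_{2n,i,j} = (4n-2i-2j)b_{2n-1,i-1,j-1} + (2i+2)b_{2n-1,i,j-1} + (2j+1)b_{2n-1,i-1,j} and b_{2n+1,i,j} = (4n-2i-2j+1)b_{2n,i-1,j} + (2i+2)b_{2n,i,j} + (2j+2)b_{2n,i-1,j+1}; moreover Σ_{i,j≥0} b_{n,i,j} = (2n-1)!!. -/

import Mathlib

open MvPolynomial Finset

/-- The Dumont derivation on `ℚ[x,y,z]`: `D x = y*z`, `D y = x*z`, `D z = x*y`. -/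
noncomputable def Dum : Derivation ℚ (MvPolynomial (Fin 3) ℚ) (MvPolynomial (Fin 3) ℚ) :=
  MvPolynomial.mkDerivation ℚ ![X 1 * X 2, X 0 * X 2, X 0 * X 1]

/-- The operator `p ↦ x * D p`. -/
noncomputable def xD : MvPolynomial (Fin 3) ℚ → MvPolynomial (Fin 3) ℚ :=
  fun p => X 0 * Dum p

/-- `bC n i j` is the coefficient `b_{n,i,j}` of `(xD)^n(y)`:
for even `n`, the coefficient of `x^(2i+2) y^(2n-1-2i-2j) z^(2j)`;
for odd `n`, the coefficient of `x^(2i+2) y^(2n-2-2i-2j) z^(2j+1)`.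
Coefficients with negative indices are `0`. -/
noncomputable def bC (n : ℕ) (i j : ℤ) : ℚ :=
  if 0 ≤ i ∧ 0 ≤ j then
    MvPolynomial.coeff
      (Finsupp.single 0 (2*i+2).toNat
        + Finsupp.single 1 ((2*(n:ℤ) - 2*i - 2*j - if Even n then 1 else 2).toNat)
        + Finsupp.single 2 ((if Even n then 2*j else 2*j+1).toNat))
      (xD^[n] (X 1))
  else 0



noncomputable def S3 (a b c : ℕ) : Fin 3 →₀ ℕ :=
  Finsupp.single 0 a + Finsupp.single 1 b + Finsupp.single 2 c

lemma S3_apply0 (a b c : ℕ) : S3 a b c 0 = a := by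
  simp [S3, Finsupp.single_apply]

lemma S3_apply1 (a b c : ℕ) : S3 a b c 1 = b := by
  simp [S3, Finsupp.single_apply]

lemma S3_apply2 (a b c : ℕ) : S3 a b c 2 = c := by
  simp [S3, Finsupp.single_apply]

lemma S3_le {a b c a' b' c' : ℕ} : S3 a b c ≤ S3 a' b' c' ↔ a ≤ a' ∧ b ≤ b' ∧ c ≤ c' := by
  rw [Finsupp.le_def]
  constructor
  · intro h
    exact ⟨by simpa [S3_apply0] using h 0, by simpa [S3_apply1] using h 1,
      by simpa [S3_apply2] using h 2⟩
  · rintro ⟨h0, h1, h2⟩ i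
    fin_cases i <;> simpa [S3_apply0, S3_apply1, S3_apply2]

lemma S3_sub (a b c a' b' c' : ℕ) : S3 a b c - S3 a' b' c' = S3 (a - a') (b - b') (c - c') := by
  ext i
  fin_cases i <;> simp [Finsupp.tsub_apply, S3_apply0, S3_apply1, S3_apply2]

lemma S3_inj {a b c a' b' c' : ℕ} : S3 a b c = S3 a' b' c' ↔ a = a' ∧ b = b' ∧ c = c' := by
  constructor
  · intro h
    refine ⟨?_, ?_, ?_⟩
    · simpa [S3_apply0] using congrArg (fun f => f 0) h
    · simpa [S3_apply1] using congrArg (fun f => f 1) h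
    · simpa [S3_apply2] using congrArg (fun f => f 2) h
  · rintro ⟨rfl, rfl, rfl⟩; rfl

lemma S3_add_single0 (a b c : ℕ) : S3 a b c + Finsupp.single 0 1 = S3 (a+1) b c := by
  ext i; fin_cases i <;> simp [S3_apply0, S3_apply1, S3_apply2, Finsupp.single_apply, Finsupp.add_apply, S3]

lemma S3_add_single1 (a b c : ℕ) : S3 a b c + Finsupp.single 1 1 = S3 a (b+1) c := by
  ext i; fin_cases i <;> simp [Finsupp.single_apply, Finsupp.add_apply, S3]

lemma S3_add_single2 (a b c : ℕ) : S3 a b c + Finsupp.single 2 1 = S3 a b (c+1) := by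
  ext i; fin_cases i <;> simp [Finsupp.single_apply, Finsupp.add_apply, S3]


lemma coeff_pderiv (i : Fin 3) (m : Fin 3 →₀ ℕ) (p : MvPolynomial (Fin 3) ℚ) :
    coeff m (pderiv i p) = (m i + 1 : ℚ) * coeff (m + Finsupp.single i 1) p := by
  induction p using MvPolynomial.induction_on' with
  | monomial t a =>
    rw [pderiv_monomial, coeff_monomial, coeff_monomial]
    rcases Nat.eq_zero_or_pos (t i) with h | h
    · have ht : t - Finsupp.single i 1 = t := by
        ext k
        rcases eq_or_ne k i with rfl | hk
        · simp [Finsupp.tsub_apply, h]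
        · simp [Finsupp.tsub_apply, Finsupp.single_apply, Ne.symm hk]
      rw [ht, h]
      have hne : m + Finsupp.single i 1 ≠ t := by
        intro he
        have := congrArg (fun f => f i) he
        simp [Finsupp.add_apply, Finsupp.single_apply, h] at this
      rw [if_neg (Ne.symm hne)]
      split <;> simp
    · by_cases he : m + Finsupp.single i 1 = t
      · have hm : m = t - Finsupp.single i 1 := by
          rw [← he]; exact (add_tsub_cancel_right _ _).symm
        have hti : m i + 1 = t i := by
          have := congrArg (fun f => f i) he
          simpa [Finsupp.add_apply, Finsupp.single_apply] using this
        rw [if_pos hm.symm, if_pos he.symm, ← hti]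
        push_cast; ring
      · have hm : m ≠ t - Finsupp.single i 1 := by
          intro hm
          apply he
          rw [hm, tsub_add_cancel_of_le]
          rwa [Finsupp.single_le_iff]
        rw [if_neg (Ne.symm hm), if_neg (Ne.symm he), mul_zero]
  | add p q hp hq =>
    simp [hp, hq, mul_add]


lemma Dum_eq (p : MvPolynomial (Fin 3) ℚ) :
    Dum p = (X 1 * X 2) * pderiv 0 p + (X 0 * X 2) * pderiv 1 p + (X 0 * X 1) * pderiv 2 p := by
  have : Dum = (X 1 * X 2 : MvPolynomial (Fin 3) ℚ) • pderiv 0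
      + (X 0 * X 2 : MvPolynomial (Fin 3) ℚ) • pderiv 1
      + (X 0 * X 1 : MvPolynomial (Fin 3) ℚ) • pderiv 2 := by
    apply MvPolynomial.derivation_ext
    intro i
    fin_cases i <;>
      simp [Dum, mkDerivation_X, pderiv_X, Pi.single_apply]
  rw [this]
  simp [smul_eq_mul]


lemma xD_eq (p : MvPolynomial (Fin 3) ℚ) :
    xD p = monomial (S3 1 1 1) 1 * pderiv 0 p + monomial (S3 2 0 1) 1 * pderiv 1 p
      + monomial (S3 2 1 0) 1 * pderiv 2 p := by
  have h1 : (X 0 : MvPolynomial (Fin 3) ℚ) * (X 1 * X 2) = monomial (S3 1 1 1) 1 := by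
    simp [X, monomial_mul, S3, add_assoc]
  have h2 : (X 0 : MvPolynomial (Fin 3) ℚ) * (X 0 * X 2) = monomial (S3 2 0 1) 1 := by
    have hs : S3 2 0 1 = Finsupp.single (0 : Fin 3) 1 + (Finsupp.single 0 1 + Finsupp.single 2 1) := by
      ext k; fin_cases k <;> simp [S3, Finsupp.single_apply]
    rw [hs]
    simp [X, monomial_mul]
  have h3 : (X 0 : MvPolynomial (Fin 3) ℚ) * (X 0 * X 1) = monomial (S3 2 1 0) 1 := by
    have hs : S3 2 1 0 = Finsupp.single (0 : Fin 3) 1 + (Finsupp.single 0 1 + Finsupp.single 1 1) := by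
      ext k; fin_cases k <;> simp [S3, Finsupp.single_apply]
    rw [hs]
    simp [X, monomial_mul]
  show X 0 * Dum p = _
  rw [Dum_eq, ← h1, ← h2, ← h3]
  ring

lemma coeff_xD (A B C : ℕ) (p : MvPolynomial (Fin 3) ℚ) :
    coeff (S3 A B C) (xD p) =
      (if 1 ≤ A ∧ 1 ≤ B ∧ 1 ≤ C then (A : ℚ) * coeff (S3 A (B-1) (C-1)) p else 0)
    + (if 2 ≤ A ∧ 1 ≤ C then ((B : ℚ)+1) * coeff (S3 (A-2) (B+1) (C-1)) p else 0)
    + (if 2 ≤ A ∧ 1 ≤ B then ((C : ℚ)+1) * coeff (S3 (A-2) (B-1) (C+1)) p else 0) := by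
  rw [xD_eq, coeff_add, coeff_add, coeff_monomial_mul', coeff_monomial_mul',
    coeff_monomial_mul']
  congr 1
  · congr 1
    · -- term 1
      by_cases h : 1 ≤ A ∧ 1 ≤ B ∧ 1 ≤ C
      · rw [if_pos (S3_le.mpr ⟨h.1, h.2.1, h.2.2⟩), if_pos h, S3_sub, one_mul,
          coeff_pderiv]
        have he : S3 (A-1) (B-1) (C-1) + Finsupp.single 0 1 = S3 A (B-1) (C-1) := by
          rw [S3_add_single0]
          congr 1
          omega
        rw [he, S3_apply0]
        have hA : ((A - 1 : ℕ) : ℚ) = (A : ℚ) - 1 := by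
          have := h.1
          push_cast [this]
          ring
        rw [hA]
        ring
      · rw [if_neg (fun hc => h ⟨(S3_le.mp hc).1, (S3_le.mp hc).2.1, (S3_le.mp hc).2.2⟩),
          if_neg h]
    · -- term 2
      by_cases h : 2 ≤ A ∧ 1 ≤ C
      · rw [if_pos (S3_le.mpr ⟨h.1, Nat.zero_le _, h.2⟩), if_pos h, S3_sub, Nat.sub_zero, one_mul,
          coeff_pderiv]
        have he : S3 (A-2) (B) (C-1) + Finsupp.single 1 1 = S3 (A-2) (B+1) (C-1) := by
          rw [S3_add_single1]
        rw [he, S3_apply1]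
      · rw [if_neg (fun hc => h ⟨(S3_le.mp hc).1, (S3_le.mp hc).2.2⟩), if_neg h]
  · -- term 3
    by_cases h : 2 ≤ A ∧ 1 ≤ B
    · rw [if_pos (S3_le.mpr ⟨h.1, h.2, Nat.zero_le _⟩), if_pos h, S3_sub, Nat.sub_zero, one_mul,
        coeff_pderiv]
      have he : S3 (A-2) (B-1) (C) + Finsupp.single 2 1 = S3 (A-2) (B-1) (C+1) := by
        rw [S3_add_single2]
      rw [he, S3_apply2]
    · rw [if_neg (fun hc => h ⟨(S3_le.mp hc).1, (S3_le.mp hc).2.1⟩), if_neg h]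

noncomputable def cz (a b c : ℤ) (p : MvPolynomial (Fin 3) ℚ) : ℚ :=
  if 0 ≤ a ∧ 0 ≤ b ∧ 0 ≤ c then coeff (S3 a.toNat b.toNat c.toNat) p else 0

lemma cz_xD (a b c : ℤ) (ha : 0 ≤ a) (hb : 0 ≤ b) (hc : 0 ≤ c) (p : MvPolynomial (Fin 3) ℚ) :
    cz a b c (xD p)
      = (a:ℚ) * cz a (b-1) (c-1) p + ((b:ℚ)+1) * cz (a-2) (b+1) (c-1) p
        + ((c:ℚ)+1) * cz (a-2) (b-1) (c+1) p := by
  obtain ⟨A, rfl⟩ : ∃ A : ℕ, a = (A : ℤ) := ⟨a.toNat, (Int.toNat_of_nonneg ha).symm⟩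
  obtain ⟨B, rfl⟩ : ∃ B : ℕ, b = (B : ℤ) := ⟨b.toNat, (Int.toNat_of_nonneg hb).symm⟩
  obtain ⟨C, rfl⟩ : ∃ C : ℕ, c = (C : ℤ) := ⟨c.toNat, (Int.toNat_of_nonneg hc).symm⟩
  simp only [cz]
  rw [if_pos ⟨ha, hb, hc⟩, Int.toNat_natCast, Int.toNat_natCast, Int.toNat_natCast, coeff_xD]
  congr 1
  · congr 1
    · by_cases h : 1 ≤ A ∧ 1 ≤ B ∧ 1 ≤ C
      · rw [if_pos h, if_pos (show (0:ℤ) ≤ (A:ℤ) ∧ 0 ≤ (B:ℤ)-1 ∧ 0 ≤ (C:ℤ)-1 by omega),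
          show ((B:ℤ)-1).toNat = B-1 by omega, show ((C:ℤ)-1).toNat = C-1 by omega]
        push_cast
        ring
      · rw [if_neg h]
        by_cases h2 : 1 ≤ B ∧ 1 ≤ C
        · have hA : A = 0 := by omega
          subst hA
          norm_num
        · rw [if_neg (show ¬((0:ℤ) ≤ (A:ℤ) ∧ 0 ≤ (B:ℤ)-1 ∧ 0 ≤ (C:ℤ)-1) by omega), mul_zero]
    · by_cases h : 2 ≤ A ∧ 1 ≤ C
      · rw [if_pos h, if_pos (show (0:ℤ) ≤ (A:ℤ)-2 ∧ 0 ≤ (B:ℤ)+1 ∧ 0 ≤ (C:ℤ)-1 by omega),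
          show ((A:ℤ)-2).toNat = A-2 by omega, show ((B:ℤ)+1).toNat = B+1 by omega,
          show ((C:ℤ)-1).toNat = C-1 by omega]
        push_cast
        ring
      · rw [if_neg h,
          if_neg (show ¬((0:ℤ) ≤ (A:ℤ)-2 ∧ 0 ≤ (B:ℤ)+1 ∧ 0 ≤ (C:ℤ)-1) by omega), mul_zero]
  · by_cases h : 2 ≤ A ∧ 1 ≤ B
    · rw [if_pos h, if_pos (show (0:ℤ) ≤ (A:ℤ)-2 ∧ 0 ≤ (B:ℤ)-1 ∧ 0 ≤ (C:ℤ)+1 by omega),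
        show ((A:ℤ)-2).toNat = A-2 by omega, show ((B:ℤ)-1).toNat = B-1 by omega,
        show ((C:ℤ)+1).toNat = C+1 by omega]
      push_cast
      ring
    · rw [if_neg h,
        if_neg (show ¬((0:ℤ) ≤ (A:ℤ)-2 ∧ 0 ≤ (B:ℤ)-1 ∧ 0 ≤ (C:ℤ)+1) by omega), mul_zero]

lemma X0X0X2 : (X 0 : MvPolynomial (Fin 3) ℚ) * (X 0 * X 2) = monomial (S3 2 0 1) 1 := by
  have hs : S3 2 0 1 = Finsupp.single (0 : Fin 3) 1 + (Finsupp.single 0 1 + Finsupp.single 2 1) := by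
    ext k; fin_cases k <;> simp [S3, Finsupp.single_apply]
  rw [hs]
  simp [X, monomial_mul]

lemma P_one : xD^[1] (X 1) = monomial (S3 2 0 1) (1 : ℚ) := by
  rw [Function.iterate_one]
  show X 0 * Dum (X 1) = _
  rw [show Dum (X 1) = X 0 * X 2 by
    simp [Dum, mkDerivation_X]]
  exact X0X0X2

lemma ne_zero_cases {x y z : ℚ} (h : x + y + z ≠ 0) : x ≠ 0 ∨ y ≠ 0 ∨ z ≠ 0 := by
  by_contra hc
  push_neg at hc
  rw [hc.1, hc.2.1, hc.2.2] at h
  simp at h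

lemma struct : ∀ n : ℕ, 1 ≤ n → ∀ A B C : ℕ, coeff (S3 A B C) (xD^[n] (X 1)) ≠ 0 →
    A + B + C = 2*n+1 ∧ A % 2 = 0 ∧ 2 ≤ A ∧ C % 2 = n % 2 := by
  intro n
  induction n with
  | zero => omega
  | succ n ih =>
    intro _ A B C hco
    rcases Nat.eq_zero_or_pos n with rfl | hn
    · rw [P_one, coeff_monomial] at hco
      by_cases heq : S3 2 0 1 = S3 A B C
      · obtain ⟨h1, h2, h3⟩ := S3_inj.mp heq
        omega
      · rw [if_neg heq] at hco
        simp at hco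
    · rw [Function.iterate_succ_apply', coeff_xD] at hco
      rcases ne_zero_cases hco with h1 | h1 | h1
      · have hP : 1 ≤ A ∧ 1 ≤ B ∧ 1 ≤ C := by
          by_contra hpc
          rw [if_neg hpc] at h1
          exact h1 rfl
        rw [if_pos hP] at h1
        have hy := right_ne_zero_of_mul h1
        obtain ⟨hd, he, hf, hg⟩ := ih hn A (B-1) (C-1) hy
        omega
      · have hP : 2 ≤ A ∧ 1 ≤ C := by
          by_contra hpc
          rw [if_neg hpc] at h1
          exact h1 rfl
        rw [if_pos hP] at h1
        have hy := right_ne_zero_of_mul h1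
        obtain ⟨hd, he, hf, hg⟩ := ih hn (A-2) (B+1) (C-1) hy
        omega
      · have hP : 2 ≤ A ∧ 1 ≤ B := by
          by_contra hpc
          rw [if_neg hpc] at h1
          exact h1 rfl
        rw [if_pos hP] at h1
        have hy := right_ne_zero_of_mul h1
        obtain ⟨hd, he, hf, hg⟩ := ih hn (A-2) (B-1) (C+1) hy
        omega

noncomputable def bC' (n : ℕ) (i j : ℤ) : ℚ :=
  if 0 ≤ i ∧ 0 ≤ j then
    coeff (S3 (2*i+2).toNat ((2*(n:ℤ) - 2*i - 2*j - if Even n then 1 else 2).toNat)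
      ((if Even n then 2*j else 2*j+1).toNat)) (xD^[n] (X 1))
  else 0

lemma cz_congr {a b c a' b' c' : ℤ} (q : MvPolynomial (Fin 3) ℚ)
    (h1 : a = a') (h2 : b = b') (h3 : c = c') : cz a b c q = cz a' b' c' q := by
  rw [h1, h2, h3]

lemma bC'_neg {n : ℕ} {i j : ℤ} (h : ¬(0 ≤ i ∧ 0 ≤ j)) : bC' n i j = 0 := by
  simp only [bC']
  rw [if_neg h]

lemma bC_cz (n : ℕ) (hn : 1 ≤ n) (i j : ℤ) :
    bC' n i j
      = cz (2*i+2) (2*(n:ℤ) - 2*i - 2*j - if Even n then 1 else 2)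
          (if Even n then 2*j else 2*j+1) (xD^[n] (X 1)) := by
  simp only [bC', cz]
  rcases Nat.even_or_odd n with he | ho
  · simp only [if_pos he]
    by_cases hij : 0 ≤ i ∧ 0 ≤ j
    · rw [if_pos hij]
      split_ifs with hg
      · rfl
      · by_contra hne
        obtain ⟨hsum, -, -, -⟩ := struct n hn _ _ _ hne
        omega
    · rw [if_neg hij]
      split_ifs with hg
      · by_contra hne
        have hne' : coeff (S3 (2*i+2).toNat (2*(n:ℤ) - 2*i - 2*j - 1).toNat (2*j).toNat)
            (xD^[n] (X 1)) ≠ 0 := fun h => hne h.symm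
        obtain ⟨-, -, hA, -⟩ := struct n hn _ _ _ hne'
        omega
      · rfl
  · have ho' := Nat.not_even_iff_odd.mpr ho
    simp only [if_neg ho']
    by_cases hij : 0 ≤ i ∧ 0 ≤ j
    · rw [if_pos hij]
      split_ifs with hg
      · rfl
      · by_contra hne
        obtain ⟨hsum, -, -, -⟩ := struct n hn _ _ _ hne
        omega
    · rw [if_neg hij]
      split_ifs with hg
      · by_contra hne
        have hne' : coeff (S3 (2*i+2).toNat (2*(n:ℤ) - 2*i - 2*j - 2).toNat (2*j+1).toNat)
            (xD^[n] (X 1)) ≠ 0 := fun h => hne h.symm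
        obtain ⟨-, -, hA, -⟩ := struct n hn _ _ _ hne'
        omega
      · rfl

lemma bC_cz_even (n : ℕ) (hn : 1 ≤ n) (he : Even n) (i j : ℤ) :
    bC' n i j = cz (2*i+2) (2*(n:ℤ) - 2*i - 2*j - 1) (2*j) (xD^[n] (X 1)) := by
  rw [bC_cz n hn i j, if_pos he, if_pos he]

lemma bC_cz_odd (n : ℕ) (hn : 1 ≤ n) (ho : ¬ Even n) (i j : ℤ) :
    bC' n i j = cz (2*i+2) (2*(n:ℤ) - 2*i - 2*j - 2) (2*j+1) (xD^[n] (X 1)) := by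
  rw [bC_cz n hn i j, if_neg ho, if_neg ho]

lemma bC'_vanish (n : ℕ) (hn : 1 ≤ n) (i j : ℤ) (h : (n:ℤ) ≤ i + j) : bC' n i j = 0 := by
  by_cases hij : 0 ≤ i ∧ 0 ≤ j
  · rcases Nat.even_or_odd n with he | ho
    · rw [bC_cz_even n hn he i j]
      simp only [cz]
      rw [if_neg (by omega)]
    · rw [bC_cz_odd n hn (Nat.not_even_iff_odd.mpr ho) i j]
      simp only [cz]
      rw [if_neg (by omega)]
  · exact bC'_neg hij

lemma bC'_rec_even (k : ℕ) (i j : ℤ) (hi : 0 ≤ i) (hj : 0 ≤ j) :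
    bC' (2*k+1+1) i j
      = (4*(k:ℚ)+4-2*(i:ℚ)-2*(j:ℚ)) * bC' (2*k+1) (i-1) (j-1)
        + (2*(i:ℚ)+2) * bC' (2*k+1) i (j-1) + (2*(j:ℚ)+1) * bC' (2*k+1) (i-1) j := by
  have hsrc : 1 ≤ 2*k+1 := by omega
  have ho : ¬ Even (2*k+1) := by rw [Nat.even_iff]; omega
  have he : Even (2*k+1+1) := by rw [Nat.even_iff]; omega
  rw [bC_cz_even (2*k+1+1) (by omega) he i j, Function.iterate_succ_apply']
  have harg : (2*((2*k+1+1 : ℕ) : ℤ) - 2*i - 2*j - 1) = (4*(k:ℤ)+3-2*i-2*j) := by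
    push_cast; ring
  rw [harg]
  by_cases hy : (0:ℤ) ≤ 4*(k:ℤ)+3-2*i-2*j
  · rw [cz_xD _ _ _ (by omega) hy (by omega)]
    rw [show cz (2*i+2) (4*(k:ℤ)+3-2*i-2*j-1) (2*j-1) (xD^[2*k+1] (X 1))
        = bC' (2*k+1) i (j-1) from by
      rw [bC_cz_odd (2*k+1) hsrc ho i (j-1)]
      exact cz_congr _ (by ring) (by push_cast; ring) (by ring)]
    rw [show cz (2*i+2-2) (4*(k:ℤ)+3-2*i-2*j+1) (2*j-1) (xD^[2*k+1] (X 1))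
        = bC' (2*k+1) (i-1) (j-1) from by
      rw [bC_cz_odd (2*k+1) hsrc ho (i-1) (j-1)]
      exact cz_congr _ (by ring) (by push_cast; ring) (by ring)]
    rw [show cz (2*i+2-2) (4*(k:ℤ)+3-2*i-2*j-1) (2*j+1) (xD^[2*k+1] (X 1))
        = bC' (2*k+1) (i-1) j from by
      rw [bC_cz_odd (2*k+1) hsrc ho (i-1) j]
      exact cz_congr _ (by ring) (by push_cast; ring) (by ring)]
    push_cast
    ring
  · rw [show cz (2*i+2) (4*(k:ℤ)+3-2*i-2*j) (2*j) (xD (xD^[2*k+1] (X 1))) = 0 from by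
      simp only [cz]; rw [if_neg (by omega)]]
    have z2 : bC' (2*k+1) i (j-1) = 0 := bC'_vanish _ hsrc _ _ (by push_cast; omega)
    have z3 : bC' (2*k+1) (i-1) j = 0 := bC'_vanish _ hsrc _ _ (by push_cast; omega)
    rcases (show i + j = 2*(k:ℤ)+2 ∨ 2*(k:ℤ)+3 ≤ i+j by omega) with hc | hc
    · have hq : (i:ℚ) + (j:ℚ) = 2*(k:ℚ)+2 := by exact_mod_cast hc
      have hco : (4*(k:ℚ)+4-2*(i:ℚ)-2*(j:ℚ)) = 0 := by linarith
      rw [z2, z3, hco]; ring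
    · have z1 : bC' (2*k+1) (i-1) (j-1) = 0 := bC'_vanish _ hsrc _ _ (by push_cast; omega)
      rw [z1, z2, z3]; ring

lemma bC'_rec_odd (k : ℕ) (hk : 1 ≤ k) (i j : ℤ) (hi : 0 ≤ i) (hj : 0 ≤ j) :
    bC' (2*k+1) i j
      = (4*(k:ℚ)-2*(i:ℚ)-2*(j:ℚ)+1) * bC' (2*k) (i-1) j
        + (2*(i:ℚ)+2) * bC' (2*k) i j + (2*(j:ℚ)+2) * bC' (2*k) (i-1) (j+1) := by
  have hsrc : 1 ≤ 2*k := by omega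
  have he : Even (2*k) := ⟨k, by ring⟩
  have ho : ¬ Even (2*k+1) := by rw [Nat.even_iff]; omega
  rw [bC_cz_odd (2*k+1) (by omega) ho i j, Function.iterate_succ_apply']
  have harg : (2*((2*k+1 : ℕ) : ℤ) - 2*i - 2*j - 2) = (4*(k:ℤ)-2*i-2*j) := by
    push_cast; ring
  rw [harg]
  by_cases hy : (0:ℤ) ≤ 4*(k:ℤ)-2*i-2*j
  · rw [cz_xD _ _ _ (by omega) hy (by omega)]
    rw [show cz (2*i+2) (4*(k:ℤ)-2*i-2*j-1) (2*j+1-1) (xD^[2*k] (X 1))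
        = bC' (2*k) i j from by
      rw [bC_cz_even (2*k) hsrc he i j]
      exact cz_congr _ (by ring) (by push_cast; ring) (by ring)]
    rw [show cz (2*i+2-2) (4*(k:ℤ)-2*i-2*j+1) (2*j+1-1) (xD^[2*k] (X 1))
        = bC' (2*k) (i-1) j from by
      rw [bC_cz_even (2*k) hsrc he (i-1) j]
      exact cz_congr _ (by ring) (by push_cast; ring) (by ring)]
    rw [show cz (2*i+2-2) (4*(k:ℤ)-2*i-2*j-1) (2*j+1+1) (xD^[2*k] (X 1))
        = bC' (2*k) (i-1) (j+1) from by
      rw [bC_cz_even (2*k) hsrc he (i-1) (j+1)]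
      exact cz_congr _ (by ring) (by push_cast; ring) (by ring)]
    push_cast
    ring
  · rw [show cz (2*i+2) (4*(k:ℤ)-2*i-2*j) (2*j+1) (xD (xD^[2*k] (X 1))) = 0 from by
      simp only [cz]; rw [if_neg (by omega)]]
    have z1 : bC' (2*k) (i-1) j = 0 := bC'_vanish _ hsrc _ _ (by push_cast; omega)
    have z2 : bC' (2*k) i j = 0 := bC'_vanish _ hsrc _ _ (by push_cast; omega)
    have z3 : bC' (2*k) (i-1) (j+1) = 0 := bC'_vanish _ hsrc _ _ (by push_cast; omega)
    rw [z1, z2, z3]; ring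

lemma shift1 (f : ℤ → ℚ) (h : f (-1) = 0) (N : ℕ) :
    ∑ i ∈ Finset.range (N+1), f ((i:ℤ)-1) = ∑ i ∈ Finset.range N, f (i:ℤ) := by
  rw [Finset.sum_range_succ' (fun i => f ((i:ℤ)-1)) N]
  have h0 : ((0:ℕ):ℤ) - 1 = -1 := by norm_num
  rw [h0, h, add_zero]
  refine Finset.sum_congr rfl fun i _ => ?_
  congr 1
  push_cast
  ring

lemma shift2 (f : ℤ → ℚ) (h : f 0 = 0) (N : ℕ) :
    ∑ j ∈ Finset.range N, f ((j:ℤ)+1) = ∑ j ∈ Finset.range (N+1), f (j:ℤ) := by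
  rw [Finset.sum_range_succ' (fun j => f (j:ℤ)) N]
  norm_num [h]

lemma bneg1 (n : ℕ) (x : ℤ) : bC' n x (-1) = 0 := bC'_neg (by omega)

lemma bneg2 (n : ℕ) (y : ℤ) : bC' n (-1) y = 0 := bC'_neg (by omega)

lemma step_even (k : ℕ) :
    (∑ i ∈ Finset.range (2*k+1+1+1), ∑ j ∈ Finset.range (2*k+1+1+1), bC' (2*k+1+1) (i:ℤ) (j:ℤ))
      = (4*(k:ℚ)+3) * ∑ i ∈ Finset.range (2*k+1+1), ∑ j ∈ Finset.range (2*k+1+1),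
          bC' (2*k+1) (i:ℤ) (j:ℤ) := by
  have hsrc : 1 ≤ 2*k+1 := by omega
  have e1 : (∑ i ∈ Finset.range (2*k+1+1+1), ∑ j ∈ Finset.range (2*k+1+1+1), bC' (2*k+1+1) (i:ℤ) (j:ℤ))
      = ∑ i ∈ Finset.range (2*k+1+1+1), ∑ j ∈ Finset.range (2*k+1+1+1),
          ( ((4*(k:ℤ)-2*((i:ℤ)-1)-2*((j:ℤ)-1) : ℤ) : ℚ) * bC' (2*k+1) ((i:ℤ)-1) ((j:ℤ)-1)
          + ((2*(i:ℤ)+2 : ℤ) : ℚ) * bC' (2*k+1) (i:ℤ) ((j:ℤ)-1)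
          + ((2*(j:ℤ)+1 : ℤ) : ℚ) * bC' (2*k+1) ((i:ℤ)-1) (j:ℤ) ) := by
    refine Finset.sum_congr rfl fun i _ => Finset.sum_congr rfl fun j _ => ?_
    rw [bC'_rec_even k (i:ℤ) (j:ℤ) (Int.natCast_nonneg i) (Int.natCast_nonneg j)]
    push_cast
    ring
  rw [e1]
  simp only [Finset.sum_add_distrib]
  have hT1 : (∑ i ∈ Finset.range (2*k+1+1+1), ∑ j ∈ Finset.range (2*k+1+1+1),
        ((4*(k:ℤ)-2*((i:ℤ)-1)-2*((j:ℤ)-1) : ℤ) : ℚ) * bC' (2*k+1) ((i:ℤ)-1) ((j:ℤ)-1))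
      = ∑ i ∈ Finset.range (2*k+1+1), ∑ j ∈ Finset.range (2*k+1+1),
          ((4*(k:ℤ)-2*(i:ℤ)-2*(j:ℤ) : ℤ) : ℚ) * bC' (2*k+1) (i:ℤ) (j:ℤ) := by
    rw [shift1 (fun x => ∑ j ∈ Finset.range (2*k+1+1+1),
        ((4*(k:ℤ)-2*x-2*((j:ℤ)-1) : ℤ) : ℚ) * bC' (2*k+1) x ((j:ℤ)-1))
      (by
        apply Finset.sum_eq_zero
        intro j _
        rw [bC'_neg (by omega)]
        ring) (2*k+1+1)]
    refine Finset.sum_congr rfl fun i _ => ?_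
    exact shift1 (fun y => ((4*(k:ℤ)-2*(i:ℤ)-2*y : ℤ) : ℚ) * bC' (2*k+1) (i:ℤ) y)
      (by simp [bneg1]) (2*k+1+1)
  have hT2 : (∑ i ∈ Finset.range (2*k+1+1+1), ∑ j ∈ Finset.range (2*k+1+1+1),
        ((2*(i:ℤ)+2 : ℤ) : ℚ) * bC' (2*k+1) (i:ℤ) ((j:ℤ)-1))
      = ∑ i ∈ Finset.range (2*k+1+1), ∑ j ∈ Finset.range (2*k+1+1),
          ((2*(i:ℤ)+2 : ℤ) : ℚ) * bC' (2*k+1) (i:ℤ) (j:ℤ) := by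
    have einner : ∀ i : ℕ, (∑ j ∈ Finset.range (2*k+1+1+1),
        ((2*(i:ℤ)+2 : ℤ) : ℚ) * bC' (2*k+1) (i:ℤ) ((j:ℤ)-1))
        = ∑ j ∈ Finset.range (2*k+1+1), ((2*(i:ℤ)+2 : ℤ) : ℚ) * bC' (2*k+1) (i:ℤ) (j:ℤ) :=
      fun i => shift1 (fun y => ((2*(i:ℤ)+2 : ℤ) : ℚ) * bC' (2*k+1) (i:ℤ) y)
        (by simp [bneg1]) (2*k+1+1)
    have htop : (∑ j ∈ Finset.range (2*k+1+1),
        ((2*(((2*k+1+1 : ℕ):ℤ))+2 : ℤ) : ℚ) * bC' (2*k+1) ((2*k+1+1 : ℕ):ℤ) (j:ℤ)) = 0 :=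
      Finset.sum_eq_zero fun j _ => by
        rw [bC'_vanish (2*k+1) hsrc ((2*k+1+1 : ℕ):ℤ) (j:ℤ) (by push_cast; omega)]
        ring
    rw [Finset.sum_congr rfl fun i _ => einner i, Finset.sum_range_succ, htop, add_zero]
  have hT3 : (∑ i ∈ Finset.range (2*k+1+1+1), ∑ j ∈ Finset.range (2*k+1+1+1),
        ((2*(j:ℤ)+1 : ℤ) : ℚ) * bC' (2*k+1) ((i:ℤ)-1) (j:ℤ))
      = ∑ i ∈ Finset.range (2*k+1+1), ∑ j ∈ Finset.range (2*k+1+1),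
          ((2*(j:ℤ)+1 : ℤ) : ℚ) * bC' (2*k+1) (i:ℤ) (j:ℤ) := by
    rw [shift1 (fun x => ∑ j ∈ Finset.range (2*k+1+1+1),
        ((2*(j:ℤ)+1 : ℤ) : ℚ) * bC' (2*k+1) x (j:ℤ))
      (by
        apply Finset.sum_eq_zero
        intro j _
        rw [bC'_neg (by omega)]
        ring) (2*k+1+1)]
    refine Finset.sum_congr rfl fun i _ => ?_
    rw [Finset.sum_range_succ]
    rw [bC'_vanish (2*k+1) hsrc (i:ℤ) ((2*k+1+1 : ℕ):ℤ) (by push_cast; omega), mul_zero, add_zero]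
  rw [hT1, hT2, hT3, Finset.mul_sum]
  rw [show (∑ i ∈ Finset.range (2*k+1+1), (4*(k:ℚ)+3) * ∑ j ∈ Finset.range (2*k+1+1),
      bC' (2*k+1) (i:ℤ) (j:ℤ))
    = ∑ i ∈ Finset.range (2*k+1+1), ∑ j ∈ Finset.range (2*k+1+1),
        (4*(k:ℚ)+3) * bC' (2*k+1) (i:ℤ) (j:ℤ) from
    Finset.sum_congr rfl fun i _ => Finset.mul_sum _ _ _]
  simp only [← Finset.sum_add_distrib]
  refine Finset.sum_congr rfl fun i _ => Finset.sum_congr rfl fun j _ => ?_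
  push_cast
  ring

lemma step_odd (k : ℕ) (hk : 1 ≤ k) :
    (∑ i ∈ Finset.range (2*k+1+1), ∑ j ∈ Finset.range (2*k+1+1), bC' (2*k+1) (i:ℤ) (j:ℤ))
      = (4*(k:ℚ)+1) * ∑ i ∈ Finset.range (2*k+1), ∑ j ∈ Finset.range (2*k+1),
          bC' (2*k) (i:ℤ) (j:ℤ) := by
  have hsrc : 1 ≤ 2*k := by omega
  have e1 : (∑ i ∈ Finset.range (2*k+1+1), ∑ j ∈ Finset.range (2*k+1+1), bC' (2*k+1) (i:ℤ) (j:ℤ))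
      = ∑ i ∈ Finset.range (2*k+1+1), ∑ j ∈ Finset.range (2*k+1+1),
          ( ((4*(k:ℤ)-2*((i:ℤ)-1)-2*(j:ℤ)-1 : ℤ) : ℚ) * bC' (2*k) ((i:ℤ)-1) (j:ℤ)
          + ((2*(i:ℤ)+2 : ℤ) : ℚ) * bC' (2*k) (i:ℤ) (j:ℤ)
          + ((2*((j:ℤ)+1) : ℤ) : ℚ) * bC' (2*k) ((i:ℤ)-1) ((j:ℤ)+1) ) := by
    refine Finset.sum_congr rfl fun i _ => Finset.sum_congr rfl fun j _ => ?_
    rw [bC'_rec_odd k hk (i:ℤ) (j:ℤ) (Int.natCast_nonneg i) (Int.natCast_nonneg j)]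
    push_cast
    ring
  rw [e1]
  simp only [Finset.sum_add_distrib]
  have hT1 : (∑ i ∈ Finset.range (2*k+1+1), ∑ j ∈ Finset.range (2*k+1+1),
        ((4*(k:ℤ)-2*((i:ℤ)-1)-2*(j:ℤ)-1 : ℤ) : ℚ) * bC' (2*k) ((i:ℤ)-1) (j:ℤ))
      = ∑ i ∈ Finset.range (2*k+1), ∑ j ∈ Finset.range (2*k+1),
          ((4*(k:ℤ)-2*(i:ℤ)-2*(j:ℤ)-1 : ℤ) : ℚ) * bC' (2*k) (i:ℤ) (j:ℤ) := by
    rw [shift1 (fun x => ∑ j ∈ Finset.range (2*k+1+1),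
        ((4*(k:ℤ)-2*x-2*(j:ℤ)-1 : ℤ) : ℚ) * bC' (2*k) x (j:ℤ)) (by simp [bneg2]) (2*k+1)]
    refine Finset.sum_congr rfl fun i _ => ?_
    rw [Finset.sum_range_succ,
      bC'_vanish (2*k) hsrc (i:ℤ) ((2*k+1 : ℕ):ℤ) (by push_cast; omega), mul_zero, add_zero]
  have hT2 : (∑ i ∈ Finset.range (2*k+1+1), ∑ j ∈ Finset.range (2*k+1+1),
        ((2*(i:ℤ)+2 : ℤ) : ℚ) * bC' (2*k) (i:ℤ) (j:ℤ))
      = ∑ i ∈ Finset.range (2*k+1), ∑ j ∈ Finset.range (2*k+1),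
          ((2*(i:ℤ)+2 : ℤ) : ℚ) * bC' (2*k) (i:ℤ) (j:ℤ) := by
    have htop : (∑ j ∈ Finset.range (2*k+1+1),
        ((2*(((2*k+1 : ℕ):ℤ))+2 : ℤ) : ℚ) * bC' (2*k) ((2*k+1 : ℕ):ℤ) (j:ℤ)) = 0 :=
      Finset.sum_eq_zero fun j _ => by
        rw [bC'_vanish (2*k) hsrc ((2*k+1 : ℕ):ℤ) (j:ℤ) (by push_cast; omega)]
        ring
    rw [Finset.sum_range_succ, htop, add_zero]
    refine Finset.sum_congr rfl fun i _ => ?_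
    rw [Finset.sum_range_succ,
      bC'_vanish (2*k) hsrc (i:ℤ) ((2*k+1 : ℕ):ℤ) (by push_cast; omega), mul_zero, add_zero]
  have hT3 : (∑ i ∈ Finset.range (2*k+1+1), ∑ j ∈ Finset.range (2*k+1+1),
        ((2*((j:ℤ)+1) : ℤ) : ℚ) * bC' (2*k) ((i:ℤ)-1) ((j:ℤ)+1))
      = ∑ i ∈ Finset.range (2*k+1), ∑ j ∈ Finset.range (2*k+1),
          ((2*(j:ℤ) : ℤ) : ℚ) * bC' (2*k) (i:ℤ) (j:ℤ) := by
    rw [shift1 (fun x => ∑ j ∈ Finset.range (2*k+1+1),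
        ((2*((j:ℤ)+1) : ℤ) : ℚ) * bC' (2*k) x ((j:ℤ)+1)) (by simp [bneg2]) (2*k+1)]
    refine Finset.sum_congr rfl fun i _ => ?_
    rw [shift2 (fun y => ((2*y : ℤ) : ℚ) * bC' (2*k) (i:ℤ) y) (by norm_num) (2*k+1+1)]
    rw [Finset.sum_range_succ,
      bC'_vanish (2*k) hsrc (i:ℤ) ((2*k+1+1 : ℕ):ℤ) (by push_cast; omega), mul_zero, add_zero]
    rw [Finset.sum_range_succ,
      bC'_vanish (2*k) hsrc (i:ℤ) ((2*k+1 : ℕ):ℤ) (by push_cast; omega), mul_zero, add_zero]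
  rw [hT1, hT2, hT3, Finset.mul_sum]
  rw [show (∑ i ∈ Finset.range (2*k+1), (4*(k:ℚ)+1) * ∑ j ∈ Finset.range (2*k+1),
      bC' (2*k) (i:ℤ) (j:ℤ))
    = ∑ i ∈ Finset.range (2*k+1), ∑ j ∈ Finset.range (2*k+1),
        (4*(k:ℚ)+1) * bC' (2*k) (i:ℤ) (j:ℤ) from
    Finset.sum_congr rfl fun i _ => Finset.mul_sum _ _ _]
  simp only [← Finset.sum_add_distrib]
  refine Finset.sum_congr rfl fun i _ => Finset.sum_congr rfl fun j _ => ?_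
  push_cast
  ring

lemma h00 : bC' 1 0 0 = 1 := by
  have e : bC' 1 0 0 = coeff (S3 2 0 1) (xD^[1] (X 1)) := by
    rw [bC_cz_odd 1 le_rfl (by decide) 0 0]
    simp only [cz]
    norm_num
    rfl
  rw [e, P_one, coeff_monomial, if_pos rfl]

lemma sum_bC' : ∀ n : ℕ, 1 ≤ n →
    (∑ i ∈ Finset.range (n+1), ∑ j ∈ Finset.range (n+1), bC' n (i:ℤ) (j:ℤ))
      = ((2*n-1).doubleFactorial : ℚ) := by
  intro n
  induction n with
  | zero => omega
  | succ n ih =>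
    intro _
    rcases Nat.eq_zero_or_pos n with rfl | hn
    · have v : ∀ i j : ℤ, 1 ≤ i + j → bC' 1 i j = 0 := fun i j h =>
        bC'_vanish 1 le_rfl i j (by exact_mod_cast h)
      simp [Finset.sum_range_succ, h00, v 0 1 (by norm_num), v 1 0 (by norm_num),
        v 1 1 (by norm_num), Nat.doubleFactorial]
    · rcases Nat.even_or_odd n with he | ho
      · obtain ⟨k, hk⟩ := he
        have hk' : n = 2*k := by omega
        subst hk'
        rw [step_odd k (by omega), ih (by omega)]
        have hd : (2*(2*k+1)-1).doubleFactorial = (4*k+1) * (2*(2*k)-1).doubleFactorial := by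
          rw [show 2*(2*k+1)-1 = (2*(2*k)-1)+2 by omega, Nat.doubleFactorial_add_two]
          congr 1
          omega
        rw [hd]
        push_cast
        ring
      · obtain ⟨k, hk⟩ := ho
        subst hk
        rw [step_even k, ih (by omega)]
        have hd : (2*(2*k+1+1)-1).doubleFactorial
            = (4*k+3) * (2*(2*k+1)-1).doubleFactorial := by
          rw [show 2*(2*k+1+1)-1 = (2*(2*k+1)-1)+2 by omega, Nat.doubleFactorial_add_two]
          congr 1
          omega
        rw [hd]
        push_cast
        ring

lemma bC_eq_bC' (n : ℕ) (i j : ℤ) : bC n i j = bC' n i j := rfl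

theorem stmt19 (n : ℕ) (hn : 1 ≤ n) :
    (∀ i j : ℤ, 0 ≤ i → 0 ≤ j →
      bC (2*n) i j =
        (4*(n:ℚ)-2*(i:ℚ)-2*(j:ℚ)) * bC (2*n-1) (i-1) (j-1) + (2*(i:ℚ)+2) * bC (2*n-1) i (j-1)
          + (2*(j:ℚ)+1) * bC (2*n-1) (i-1) j ∧
      bC (2*n+1) i j =
        (4*(n:ℚ)-2*(i:ℚ)-2*(j:ℚ)+1) * bC (2*n) (i-1) j + (2*(i:ℚ)+2) * bC (2*n) i j
          + (2*(j:ℚ)+2) * bC (2*n) (i-1) (j+1)) ∧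
    ∑ i ∈ Finset.range (n+1), ∑ j ∈ Finset.range (n+1), bC n (i:ℤ) (j:ℤ)
      = ((2*n-1).doubleFactorial : ℚ) := by
  refine ⟨fun i j hi hj => ⟨?_, ?_⟩, ?_⟩
  · simp only [bC_eq_bC']
    obtain ⟨k, rfl⟩ : ∃ k, n = k+1 := ⟨n-1, by omega⟩
    rw [show 2*(k+1)-1 = 2*k+1 by omega, show 2*(k+1) = 2*k+1+1 by omega,
      bC'_rec_even k i j hi hj]
    push_cast
    ring
  · simp only [bC_eq_bC']
    exact bC'_rec_odd n hn i j hi hj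
  · simp only [bC_eq_bC']
    exact sum_bC' n hn
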